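/- Central Sets Theorem with countably many sequences: let (S,+) be a countable commutative semigroup, let A be central in S, and for each l ∈ ℕ let ⟨y_{l,n}⟩_{n=1}^∞ be a sequence in S. Then there exist a sequence ⟨a_n⟩ in S and a sequence ⟨H_n⟩ in P_f(ℕ) with max H_n < min H_{n+1} for each n, such that for every f : ℕ → ℕ with f(n) ≤ n for all n, all finite sums FS(⟨a_n + ∑_{t∈H_n} y_{f(n),t}⟩_{n=1}^∞) are contained in A. -/

import Mathlib

/-- Fold of addition along a list, starting from `a` (no identity needed). -/
def addChain {S : Type*} [Add S] : S → List S → S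
  | a, [] => a
  | a, b :: l => addChain (a + b) l

/-- The sum `∑ t ∈ H, f t` in an additive commutative semigroup (junk value `f 0`
for `H = ∅`; we only use it for nonempty `H`). -/
def finSum {S : Type*} [AddCommSemigroup S] (f : ℕ → S) (H : Finset ℕ) : S :=
  match H.sort (· ≤ ·) with
  | [] => f 0
  | a :: l => addChain (f a) (l.map f)

def AddThick {S : Type*} [AddCommSemigroup S] (A : Set S) : Prop :=
  ∀ E : Finset S, E.Nonempty → ∃ x : S, ∀ e ∈ E, e + x ∈ A

def AddPiecewiseSyndetic {S : Type*} [AddCommSemigroup S] (A : Set S) : Prop :=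
  ∃ F : Finset S, F.Nonempty ∧ AddThick {s : S | ∃ t ∈ F, t + s ∈ A}

/-- Combinatorial characterization of central sets. -/
def AddCentral {S : Type*} [AddCommSemigroup S] (A : Set S) : Prop :=
  ∃ C : ℕ → Set S, (∀ n, C n ⊆ A) ∧ (∀ n, C (n + 1) ⊆ C n) ∧
    (∀ n, AddPiecewiseSyndetic (C n)) ∧
    (∀ n, ∀ x ∈ C n, ∃ m, C m ⊆ {s : S | x + s ∈ C n})

namespace CSTaux
variable {S : Type*} [AddCommSemigroup S]

lemma coe_addChain (a : S) (l : List S) :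
    ((addChain a l : S) : WithZero S) = (a : WithZero S) + (l.map ((↑·) : S → WithZero S)).sum := by
  induction l generalizing a with
  | nil => simp [addChain]
  | cons b l ih => simp [addChain, ih, add_assoc]

lemma coe_finSum (f : ℕ → S) (H : Finset ℕ) (hH : H.Nonempty) :
    ((finSum f H : S) : WithZero S) = ∑ t ∈ H, ((f t : WithZero S)) := by
  classical
  obtain ⟨x, xs, hl⟩ : ∃ x xs, H.sort (· ≤ ·) = x :: xs := by
    rcases h : H.sort (· ≤ ·) with _ | ⟨x, xs⟩
    · exfalso
      obtain ⟨z, hz⟩ := hH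
      have := (Finset.mem_sort (· ≤ ·)).mpr hz
      simp [h] at this
    · exact ⟨x, xs, rfl⟩
  have h2 : ∑ t ∈ H, ((f t : WithZero S)) = ((H.sort (· ≤ ·)).map (fun t => (f t : WithZero S))).sum := by
    rw [Finset.sum]
    conv_lhs => rw [← Finset.sort_eq (s := H) (r := (· ≤ ·))]
    rw [Multiset.map_coe, Multiset.sum_coe]
  rw [h2]
  unfold finSum
  rw [hl]
  rw [coe_addChain]
  simp [List.map_map, Function.comp_def]

lemma finSum_congr {f g : ℕ → S} {H : Finset ℕ} (hH : H.Nonempty)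
    (h : ∀ t ∈ H, f t = g t) : finSum f H = finSum g H := by
  rw [← WithZero.coe_inj, coe_finSum _ _ hH, coe_finSum _ _ hH]
  exact Finset.sum_congr rfl (by simp +contextual [h])

lemma finSum_singleton (f : ℕ → S) (x : ℕ) : finSum f {x} = f x := by
  show (match Finset.sort {x} (· ≤ ·) with
  | [] => f 0
  | a :: l => addChain (f a) (l.map f)) = f x
  rw [Finset.sort_singleton]
  rfl

lemma finSum_union {f : ℕ → S} {H₁ H₂ : Finset ℕ} (hd : Disjoint H₁ H₂)
    (h1 : H₁.Nonempty) (h2 : H₂.Nonempty) :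
    finSum f (H₁ ∪ H₂) = finSum f H₁ + finSum f H₂ := by
  classical
  rw [← WithZero.coe_inj, coe_finSum _ _ (h1.mono Finset.subset_union_left), WithZero.coe_add,
    coe_finSum _ _ h1, coe_finSum _ _ h2, Finset.sum_union hd]

open Combinatorics in
lemma keyStep (C : Set S) (hC : AddPiecewiseSyndetic C) (y : ℕ → ℕ → S) (k b : ℕ) :
    ∃ (a : S) (H : Finset ℕ), H.Nonempty ∧ (∀ t ∈ H, b < t) ∧
      ∀ i ≤ k, a + finSum (y i) H ∈ C := by
  classical
  obtain ⟨F, hF, hT⟩ := hC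
  obtain ⟨ι, ιfin, hHJ⟩ := Line.exists_mono_in_high_dimension (Fin (k + 1)) {t // t ∈ F}
  set pos : ι → ℕ := fun i => b + 1 + (Fintype.equivFin ι i : ℕ) with hpos
  have pos_inj : Function.Injective pos := by
    intro i j h
    simp only [hpos] at h
    exact (Fintype.equivFin ι).injective (Fin.val_injective (by omega))
  set P : Finset ℕ := Finset.image pos Finset.univ with hP
  set u : (ι → Fin (k + 1)) → ℕ → ℕ := fun w p =>
    if h : ∃ i, pos i = p then (w h.choose : ℕ) else 0 with hu
  have hu' : ∀ w i, u w (pos i) = (w i : ℕ) := by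
    intro w i
    have h : ∃ j, pos j = pos i := ⟨i, rfl⟩
    simp only [hu, dif_pos h]
    congr 2
    exact pos_inj h.choose_spec
  set σ : (ι → Fin (k + 1)) → S := fun w => finSum (fun p => y (u w p) p) P with hσ
  have hne : Nonempty (ι → Fin (k + 1)) := ⟨fun _ => 0⟩
  have hE : (Finset.image σ Finset.univ).Nonempty := Finset.univ_nonempty.image σ
  obtain ⟨x, hx⟩ := hT _ hE
  have hcol : ∀ w : ι → Fin (k + 1), ∃ t : {t // t ∈ F}, (t : S) + (σ w + x) ∈ C := by
    intro w
    obtain ⟨t, ht, htc⟩ := hx (σ w) (Finset.mem_image_of_mem σ (Finset.mem_univ w))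
    exact ⟨⟨t, ht⟩, htc⟩
  choose col hcolspec using hcol
  obtain ⟨l, c, hmono⟩ := hHJ col
  set W : Finset ι := Finset.univ.filter (fun i => l.idxFun i = none) with hW
  have hWne : W.Nonempty := by
    obtain ⟨i, hi⟩ := l.proper
    exact ⟨i, by simp [hW, hi]⟩
  set Wc : Finset ι := Finset.univ.filter (fun i => l.idxFun i ≠ none) with hWc
  set H : Finset ℕ := W.image pos with hH
  have hHne : H.Nonempty := hWne.image pos
  have hPsplit : P = H ∪ Wc.image pos := by
    rw [hH, hWc, hW, ← Finset.image_union]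
    ext i
    simp [hP, em]
  have hdisj : Disjoint H (Wc.image pos) := by
    rw [Finset.disjoint_left]
    rintro p hp hq
    obtain ⟨i, hi, rfl⟩ := Finset.mem_image.mp hp
    obtain ⟨j, hj, hij⟩ := Finset.mem_image.mp hq
    cases pos_inj hij
    simp [hW] at hi
    simp [hWc, hi] at hj
  -- the letter at a wildcard position is the line parameter
  have hletterW : ∀ (v : Fin (k + 1)) (p : ℕ), p ∈ H → u (l v) p = (v : ℕ) := by
    intro v p hp
    obtain ⟨i, hi, rfl⟩ := Finset.mem_image.mp hp
    simp only [hW, Finset.mem_filter] at hi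
    rw [hu' (l v) i, l.apply_none v i hi.2]
  -- the letter at a fixed position does not depend on the parameter
  have hletterWc : ∀ (v : Fin (k + 1)) (p : ℕ), p ∈ Wc.image pos →
      u (l v) p = u (l 0) p := by
    intro v p hp
    obtain ⟨i, hi, rfl⟩ := Finset.mem_image.mp hp
    simp only [hWc, Finset.mem_filter] at hi
    obtain ⟨a, ha⟩ := Option.ne_none_iff_exists'.mp hi.2
    rw [hu' (l v) i, hu' (l 0) i, Line.apply_some ha, Line.apply_some ha]
  have main : ∀ (i : ℕ), i ≤ k → ∀ v : Fin (k+1), (v : ℕ) = i →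
      σ (l v) + x ∈ {s : S | (c : S) + s ∈ C} := by
    intro i hik v hv
    have := hcolspec (l v)
    rw [hmono v] at this
    exact this
  rcases Finset.eq_empty_or_nonempty Wc with hWcE | hWcNE
  · refine ⟨(c : S) + x, H, hHne, ?_, ?_⟩
    · intro t ht
      obtain ⟨i, _, rfl⟩ := Finset.mem_image.mp ht
      simp [hpos]
      omega
    · intro i hik
      set v : Fin (k + 1) := ⟨i, Nat.lt_succ_of_le hik⟩ with hv
      have hveq : (v : ℕ) = i := rfl
      have hσeq : σ (l v) = finSum (y i) H := by
        have hPH : P = H := by rw [hPsplit, hWcE]; simp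
        simp only [hσ, hPH]
        exact finSum_congr hHne (fun p hp => by rw [hletterW v p hp, hveq])
      have := main i hik v hveq
      rw [Set.mem_setOf_eq, hσeq] at this
      have heq : (c : S) + x + finSum (y i) H = (c : S) + (finSum (y i) H + x) := by ac_rfl
      rw [heq]; exact this
  · set fixS : S := finSum (fun p => y (u (l 0) p) p) (Wc.image pos) with hfixS
    refine ⟨(c : S) + (x + fixS), H, hHne, ?_, ?_⟩
    · intro t ht
      obtain ⟨i, _, rfl⟩ := Finset.mem_image.mp ht
      simp [hpos]
      omega
    · intro i hik
      set v : Fin (k + 1) := ⟨i, Nat.lt_succ_of_le hik⟩ with hv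
      have hveq : (v : ℕ) = i := rfl
      have hσeq : σ (l v) = finSum (y i) H + fixS := by
        simp only [hσ, hPsplit]
        rw [finSum_union hdisj hHne (hWcNE.image pos)]
        congr 1
        · exact finSum_congr hHne (fun p hp => by rw [hletterW v p hp, hveq])
        · exact finSum_congr (hWcNE.image pos) (fun p hp => by rw [hletterWc v p hp])
      have := main i hik v hveq
      rw [Set.mem_setOf_eq, hσeq] at this
      have heq : (c : S) + (x + fixS) + finSum (y i) H
          = (c : S) + (finSum (y i) H + fixS + x) := by ac_rfl
      rw [heq]; exact this


/-- The summand function. -/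
def gfun (y : ℕ → ℕ → S) (a : ℕ → S) (H : ℕ → Finset ℕ) (f : ℕ → ℕ) : ℕ → S :=
  fun j => a j + finSum (y (f j)) (H j)

/-- The inductive invariant of the construction. -/
def Inv (C : ℕ → Set S) (y : ℕ → ℕ → S) (n : ℕ) (a : ℕ → S) (H : ℕ → Finset ℕ)
    (m : ℕ → ℕ) : Prop :=
  (∀ j < n, (H j).Nonempty) ∧
  (∀ j, j + 1 < n → ∀ s ∈ H j, ∀ t ∈ H (j + 1), s < t) ∧
  (∀ F : Finset ℕ, ∀ f : ℕ → ℕ, ∀ hF : F.Nonempty, F ⊆ Finset.range n →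
    (∀ j ∈ F, f j ≤ j) → finSum (gfun y a H f) F ∈ C (m (F.min' hF))) ∧
  (∀ F : Finset ℕ, ∀ f : ℕ → ℕ, ∀ hF : F.Nonempty, F ⊆ Finset.range n →
    (∀ j ∈ F, f j ≤ j) → ∀ s ∈ C (m n),
      finSum (gfun y a H f) F + s ∈ C (m (F.min' hF)))

lemma step (C : ℕ → Set S) (y : ℕ → ℕ → S)
    (hmono : ∀ {i j : ℕ}, i ≤ j → C j ⊆ C i)
    (hCpws : ∀ n, AddPiecewiseSyndetic (C n))
    (hCstar : ∀ n, ∀ x ∈ C n, ∃ m', C m' ⊆ {s : S | x + s ∈ C n})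
    (n : ℕ) (a : ℕ → S) (H : ℕ → Finset ℕ) (m : ℕ → ℕ)
    (hInv : Inv C y n a H m) :
    ∃ aN HN M, Inv C y (n + 1) (Function.update a n aN) (Function.update H n HN)
      (Function.update m (n + 1) M) := by
  classical
  obtain ⟨h1, h2, h3, h4⟩ := hInv
  set b : ℕ := (Finset.range n).sup (fun j => (H j).sup id) with hb
  obtain ⟨aN, HN, hHNne, hHNgt, hHNmem⟩ := keyStep (C (m n)) (hCpws (m n)) y n b
  set a' := Function.update a n aN with ha'
  set H' := Function.update H n HN with hH'
  have hH'lt : ∀ j, j ≠ n → H' j = H j := fun j hj => Function.update_of_ne hj _ _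
  have hH'n : H' n = HN := Function.update_self _ _ _
  have ha'lt : ∀ j, j ≠ n → a' j = a j := fun j hj => Function.update_of_ne hj _ _
  have ha'n : a' n = aN := Function.update_self _ _ _
  have h1' : ∀ j < n + 1, (H' j).Nonempty := by
    intro j hj
    rcases eq_or_ne j n with rfl | hne
    · rwa [hH'n]
    · rw [hH'lt j hne]; exact h1 j (by omega)
  have h2' : ∀ j, j + 1 < n + 1 → ∀ s ∈ H' j, ∀ t ∈ H' (j + 1), s < t := by
    intro j hj s hs t ht
    rcases eq_or_ne (j + 1) n with hjn | hne
    · rw [hH'lt j (by omega)] at hs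
      rw [hjn, hH'n] at ht
      have hsb : s ≤ b := by
        rw [hb]
        calc s = id s := rfl
        _ ≤ (H j).sup id := Finset.le_sup hs
        _ ≤ _ := Finset.le_sup (f := fun j => (H j).sup id) (Finset.mem_range.mpr (by omega))
      exact lt_of_le_of_lt hsb (hHNgt t ht)
    · rw [hH'lt j (by omega)] at hs
      rw [hH'lt (j + 1) hne] at ht
      exact h2 j (by omega) s hs t ht
  have hgn : ∀ f : ℕ → ℕ, f n ≤ n → gfun y a' H' f n ∈ C (m n) := by
    intro f hf
    show a' n + finSum (y (f n)) (H' n) ∈ C (m n)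
    rw [ha'n, hH'n]
    exact hHNmem (f n) hf
  have hgcongr : ∀ (f : ℕ → ℕ) (F : Finset ℕ), F ⊆ Finset.range n → F.Nonempty →
      finSum (gfun y a' H' f) F = finSum (gfun y a H f) F := by
    intro f F hFsub hFne
    refine finSum_congr hFne (fun j hj => ?_)
    have hjn : j ≠ n := by have := Finset.mem_range.mp (hFsub hj); omega
    show a' j + finSum (y (f j)) (H' j) = a j + finSum (y (f j)) (H j)
    rw [ha'lt j hjn, hH'lt j hjn]
  have h3' : ∀ F : Finset ℕ, ∀ f : ℕ → ℕ, ∀ hF : F.Nonempty, F ⊆ Finset.range (n + 1) →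
      (∀ j ∈ F, f j ≤ j) → finSum (gfun y a' H' f) F ∈ C (m (F.min' hF)) := by
    intro F f hF hFsub hfle
    rcases eq_or_ne F {n} with rfl | hFsing
    · rw [finSum_singleton, Finset.min'_singleton]
      exact hgn f (hfle n (Finset.mem_singleton_self n))
    by_cases hnF : n ∈ F
    · have hF0ne : (F.erase n).Nonempty :=
        (Finset.erase_nonempty hnF).mpr ((Finset.nontrivial_iff_ne_singleton hnF).mpr hFsing)
      have hF0sub : F.erase n ⊆ Finset.range n := by
        intro j hj
        obtain ⟨hjn, hjF⟩ := Finset.mem_erase.mp hj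
        exact Finset.mem_range.mpr (by have := Finset.mem_range.mp (hFsub hjF); omega)
      have hunion : F = F.erase n ∪ {n} := by
        rw [Finset.union_comm, ← Finset.insert_eq, Finset.insert_erase hnF]
      have hdisj : Disjoint (F.erase n) ({n} : Finset ℕ) := by
        simp [Finset.disjoint_singleton_right]
      have hsplit : finSum (gfun y a' H' f) F
          = finSum (gfun y a H f) (F.erase n) + gfun y a' H' f n := by
        conv_lhs => rw [hunion]
        rw [finSum_union hdisj hF0ne (Finset.singleton_nonempty n), finSum_singleton,
          hgcongr f (F.erase n) hF0sub hF0ne]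
      have hw : gfun y a' H' f n ∈ C (m n) := hgn f (hfle n hnF)
      have hmem := h4 (F.erase n) f hF0ne hF0sub
        (fun j hj => hfle j (Finset.mem_of_mem_erase hj)) _ hw
      have hmin : F.min' hF = (F.erase n).min' hF0ne := by
        apply le_antisymm
        · exact Finset.min'_le _ _ (Finset.mem_of_mem_erase ((F.erase n).min'_mem hF0ne))
        · apply Finset.min'_le
          refine Finset.mem_erase.mpr ⟨?_, F.min'_mem hF⟩
          intro hEq
          obtain ⟨x, hx⟩ := hF0ne
          have hxlt := Finset.mem_range.mp (hF0sub hx)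
          have := Finset.min'_le F x (Finset.mem_of_mem_erase hx)
          omega
      rw [hsplit, hmin]
      exact hmem
    · have hFsub' : F ⊆ Finset.range n := fun j hj => Finset.mem_range.mpr (by
        have h := Finset.mem_range.mp (hFsub hj)
        rcases eq_or_ne j n with rfl | hne
        · exact absurd hj hnF
        · omega)
      rw [hgcongr f F hFsub' hF]
      exact h3 F f hF hFsub' hfle
  -- construction of the new bound M
  set rec : (Finset ℕ × ((j : ℕ) → j ∈ Finset.range (n + 1) → ℕ)) → ℕ → ℕ :=
    fun q j => if h : j ∈ Finset.range (n + 1) then q.2 j h else 0 with hrec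
  set φ : (Finset ℕ × ((j : ℕ) → j ∈ Finset.range (n + 1) → ℕ)) → ℕ := fun q =>
    if h : ∃ hq : q.1.Nonempty, q.1 ⊆ Finset.range (n + 1) ∧ ∀ j ∈ q.1, rec q j ≤ j then
      (hCstar (m (q.1.min' h.choose)) _
        (h3' q.1 (rec q) h.choose h.choose_spec.1 h.choose_spec.2)).choose
    else 0 with hφ
  set D := ((Finset.range (n + 1)).powerset ×ˢ
    (Finset.range (n + 1)).pi (fun _ => Finset.range (n + 1))) with hD
  set M := D.sup φ with hM
  have h4' : ∀ F : Finset ℕ, ∀ f : ℕ → ℕ, ∀ hF : F.Nonempty, F ⊆ Finset.range (n + 1) →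
      (∀ j ∈ F, f j ≤ j) → ∀ s ∈ C M,
      finSum (gfun y a' H' f) F + s ∈ C (m (F.min' hF)) := by
    intro F f hF hFsub hfle s hs
    set p : (j : ℕ) → j ∈ Finset.range (n + 1) → ℕ := fun j _ => if j ∈ F then f j else 0
      with hp
    have hqD : (F, p) ∈ D := by
      rw [hD, Finset.mem_product]
      refine ⟨Finset.mem_powerset.mpr hFsub, ?_⟩
      rw [Finset.mem_pi]
      intro j hj
      by_cases hjF : j ∈ F
      · simp only [hp, if_pos hjF]
        exact Finset.mem_range.mpr
          (lt_of_le_of_lt (hfle j hjF) (Finset.mem_range.mp (hFsub hjF)))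
      · simp only [hp, if_neg hjF]
        exact Finset.mem_range.mpr (by omega)
    have hrecF : ∀ j ∈ F, rec (F, p) j = f j := by
      intro j hj
      have hjr : j ∈ Finset.range (n + 1) := hFsub hj
      simp only [hrec, dif_pos hjr, hp, if_pos hj]
    have hcond : ∃ hq : F.Nonempty, F ⊆ Finset.range (n + 1) ∧ ∀ j ∈ F, rec (F, p) j ≤ j :=
      ⟨hF, hFsub, fun j hj => by rw [hrecF j hj]; exact hfle j hj⟩
    have hφspec : C (φ (F, p)) ⊆
        {s : S | finSum (gfun y a' H' (rec (F, p))) F + s ∈ C (m (F.min' hF))} := by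
      simp only [hφ]
      rw [dif_pos hcond]
      exact (hCstar (m (F.min' hcond.choose)) _
        (h3' F (rec (F, p)) hcond.choose hcond.choose_spec.1 hcond.choose_spec.2)).choose_spec
    have hle : φ (F, p) ≤ M := Finset.le_sup hqD
    have := hφspec (hmono hle hs)
    rw [Set.mem_setOf_eq] at this
    have hsum : finSum (gfun y a' H' (rec (F, p))) F = finSum (gfun y a' H' f) F :=
      finSum_congr hF (fun j hj => by
        show a' j + finSum (y (rec (F, p) j)) (H' j) = a' j + finSum (y (f j)) (H' j)
        rw [hrecF j hj])
    rwa [hsum] at this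
  -- assemble
  refine ⟨aN, HN, M, h1', h2', ?_, ?_⟩
  · intro F f hF hFsub hfle
    have hmlt : F.min' hF ≠ n + 1 := by
      have := Finset.mem_range.mp (hFsub (F.min'_mem hF))
      omega
    rw [Function.update_of_ne hmlt]
    exact h3' F f hF hFsub hfle
  · intro F f hF hFsub hfle s hs
    have hmlt : F.min' hF ≠ n + 1 := by
      have := Finset.mem_range.mp (hFsub (F.min'_mem hF))
      omega
    rw [Function.update_of_ne hmlt]
    rw [Function.update_self] at hs
    exact h4' F f hF hFsub hfle s hs

end CSTaux
namespace CSTaux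

variable {S : Type*} [AddCommSemigroup S]

lemma inv_zero (C : ℕ → Set S) (y : ℕ → ℕ → S) (s0 : S) :
    Inv C y 0 (fun _ => s0) (fun _ => ∅) (fun _ => 0) := by
  refine ⟨fun j hj => by omega, fun j hj => by omega, ?_, ?_⟩ <;>
  · intro F f hF hFsub
    exfalso
    rw [Finset.range_zero, Finset.subset_empty] at hFsub
    exact Finset.not_nonempty_empty (hFsub ▸ hF)

lemma mainCST (A : Set S) (C : ℕ → Set S) (y : ℕ → ℕ → S)
    (hCA : ∀ n, C n ⊆ A)
    (hCdec : ∀ n, C (n + 1) ⊆ C n)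
    (hCpws : ∀ n, AddPiecewiseSyndetic (C n))
    (hCstar : ∀ n, ∀ x ∈ C n, ∃ m', C m' ⊆ {s : S | x + s ∈ C n}) :
    ∃ (a : ℕ → S) (H : ℕ → Finset ℕ),
      (∀ n, (H n).Nonempty) ∧
      (∀ n, ∀ s ∈ H n, ∀ t ∈ H (n + 1), s < t) ∧
      (∀ f : ℕ → ℕ, (∀ n, f n ≤ n) → ∀ F : Finset ℕ, F.Nonempty →
        finSum (fun n => a n + finSum (y (f n)) (H n)) F ∈ A) := by
  classical
  have hmono : ∀ {i j : ℕ}, i ≤ j → C j ⊆ C i := fun {i j} hij =>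
    antitone_nat_of_succ_le (f := C) (fun n => hCdec n) hij
  obtain ⟨F0, hF0, -⟩ := hCpws 0
  obtain ⟨s0, -⟩ := hF0
  -- one construction step, as a choice function
  have hstep : ∀ (n : ℕ) (st : (ℕ → S) × (ℕ → Finset ℕ) × (ℕ → ℕ)),
      Inv C y n st.1 st.2.1 st.2.2 →
      ∃ st' : (ℕ → S) × (ℕ → Finset ℕ) × (ℕ → ℕ),
        Inv C y (n + 1) st'.1 st'.2.1 st'.2.2 ∧
        (∀ j < n, st'.1 j = st.1 j) ∧ (∀ j < n, st'.2.1 j = st.2.1 j) := by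
    intro n st h
    obtain ⟨aN, HN, M, h'⟩ := step C y (fun {i j} => hmono) hCpws hCstar n st.1 st.2.1 st.2.2 h
    exact ⟨(Function.update st.1 n aN, Function.update st.2.1 n HN,
        Function.update st.2.2 (n + 1) M), h',
      fun j hj => Function.update_of_ne (by omega) _ _,
      fun j hj => Function.update_of_ne (by omega) _ _⟩
  choose next hnext1 hnext2 hnext3 using hstep
  let states : (n : ℕ) →
      {st : (ℕ → S) × (ℕ → Finset ℕ) × (ℕ → ℕ) // Inv C y n st.1 st.2.1 st.2.2} :=
    fun n => Nat.rec ⟨(fun _ => s0, fun _ => ∅, fun _ => 0), inv_zero C y s0⟩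
      (fun k ih => ⟨next k ih.1 ih.2, hnext1 k ih.1 ih.2⟩) n
  set aF : ℕ → S := fun j => (states (j + 1)).1.1 j with haF
  set HF : ℕ → Finset ℕ := fun j => (states (j + 1)).1.2.1 j with hHF
  have agreeA : ∀ N j, j < N → (states N).1.1 j = aF j := by
    intro N
    induction N with
    | zero => omega
    | succ k ih =>
      intro j hj
      rcases eq_or_ne j k with rfl | hne
      · rfl
      · have hj' : j < k := by omega
        have heq : (states (k + 1)).1.1 j = (states k).1.1 j :=
          hnext2 k (states k).1 (states k).2 j hj'
        rw [heq]
        exact ih j hj'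
  have agreeH : ∀ N j, j < N → (states N).1.2.1 j = HF j := by
    intro N
    induction N with
    | zero => omega
    | succ k ih =>
      intro j hj
      rcases eq_or_ne j k with rfl | hne
      · rfl
      · have hj' : j < k := by omega
        have heq : (states (k + 1)).1.2.1 j = (states k).1.2.1 j :=
          hnext3 k (states k).1 (states k).2 j hj'
        rw [heq]
        exact ih j hj'
  refine ⟨aF, HF, ?_, ?_, ?_⟩
  · intro n
    have := (states (n + 1)).2.1 n (by omega)
    rwa [agreeH (n + 1) n (by omega)] at this
  · intro n s hs t ht
    have h2 := (states (n + 2)).2.2.1 n (by omega)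
    rw [agreeH (n + 2) n (by omega), agreeH (n + 2) (n + 1) (by omega)] at h2
    exact h2 s hs t ht
  · intro f hf F hFne
    set N := F.max' hFne + 1 with hN
    have hFsub : F ⊆ Finset.range N := by
      intro j hj
      exact Finset.mem_range.mpr (by have := Finset.le_max' F j hj; omega)
    have h3 := (states N).2.2.2.1 F f hFne hFsub (fun j _ => hf j)
    have hcongr : finSum (gfun y (states N).1.1 (states N).1.2.1 f) F
        = finSum (fun n => aF n + finSum (y (f n)) (HF n)) F := by
      refine finSum_congr hFne (fun j hj => ?_)
      have hjN : j < N := Finset.mem_range.mp (hFsub hj)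
      show (states N).1.1 j + finSum (y (f j)) ((states N).1.2.1 j) = _
      rw [agreeA N j hjN, agreeH N j hjN]
    rw [hcongr] at h3
    exact hCA _ h3


end CSTaux

/-- Central Sets Theorem with countably many sequences: all finite sums
`FS(⟨a_n + ∑_{t ∈ H_n} y_{f(n),t}⟩)` land in `A`, for every choice function `f` with
`f(n) ≤ n`. -/
theorem centralSetsTheorem_countably_many_sequences {S : Type*} [AddCommSemigroup S]
    [Countable S] (A : Set S) (hA : AddCentral A) (y : ℕ → ℕ → S) :
    ∃ (a : ℕ → S) (H : ℕ → Finset ℕ),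
      (∀ n, (H n).Nonempty) ∧
      (∀ n, ∀ s ∈ H n, ∀ t ∈ H (n + 1), s < t) ∧
      (∀ f : ℕ → ℕ, (∀ n, f n ≤ n) → ∀ F : Finset ℕ, F.Nonempty →
        finSum (fun n => a n + finSum (y (f n)) (H n)) F ∈ A) := by
  obtain ⟨C, hCA, hCdec, hCpws, hCstar⟩ := hA
  exact CSTaux.mainCST A C y hCA hCdec hCpws hCstar
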